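/- Let p > 1 and let (ξ_n)_{n≥1} be a sequence of real random variables with τ_{φ_p}(ξ_n) < ∞ for each n. Suppose there exist positive constants c and α such that for every natural number n, τ_{φ_p}(∑_{i=1}^n ξ_i) ≤ c·n^{1−α}. Then for every ε > 0 the series ∑_{n=1}^∞ P(|∑_{i=1}^n ξ_i| ≥ nε) converges; i.e., n^{−1} ∑_{i=1}^n ξ_i converges to 0 completely. -/

import Mathlib

open MeasureTheory Real Filter
open scoped ENNReal NNReal

set_option maxHeartbeats 1000000


noncomputable def phi (p : ℝ) (x : ℝ) : ℝ :=
  if |x| ≤ 1 then x ^ 2 / 2 else (1 / p) * |x| ^ p - 1 / p + 1 / 2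

def subSet {Ω : Type*} [MeasurableSpace Ω] (μ : Measure Ω) (φ : ℝ → ℝ) (ξ : Ω → ℝ) :
    Set ℝ :=
  {a | 0 ≤ a ∧ ∀ l : ℝ,
    ∫⁻ ω, ENNReal.ofReal (Real.exp (l * ξ ω)) ∂μ ≤ ENNReal.ofReal (Real.exp (φ (a * l)))}

noncomputable def tau {Ω : Type*} [MeasurableSpace Ω] (μ : Measure Ω) (φ : ℝ → ℝ)
    (ξ : Ω → ℝ) : ℝ :=
  sInf (subSet μ φ ξ)

lemma phi_abs (p x : ℝ) : phi p |x| = phi p x := by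
  simp [phi, abs_abs, sq_abs]

lemma phi_neg (p x : ℝ) : phi p (-x) = phi p x := by
  rw [← phi_abs p (-x), abs_neg, phi_abs]

lemma phi_mono (p : ℝ) (hp : 1 ≤ p) {a b : ℝ} (ha : 0 ≤ a) (hab : a ≤ b) :
    phi p a ≤ phi p b := by
  have hb : 0 ≤ b := ha.trans hab
  have hp0 : 0 < p := lt_of_lt_of_le one_pos hp
  unfold phi
  rw [abs_of_nonneg ha, abs_of_nonneg hb]
  by_cases h1 : b ≤ 1
  · rw [if_pos (hab.trans h1), if_pos h1]
    have := pow_le_pow_left₀ ha hab 2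
    linarith
  · rw [if_neg h1]
    push_neg at h1
    have hb1 : (1:ℝ) ≤ b ^ p := by
      calc (1:ℝ) = 1 ^ p := (Real.one_rpow p).symm
      _ ≤ b ^ p := Real.rpow_le_rpow zero_le_one h1.le hp0.le
    by_cases h2 : a ≤ 1
    · rw [if_pos h2]
      have h3 : a ^ 2 ≤ 1 := by nlinarith
      have h4 : 0 ≤ (1/p) * (b ^ p - 1) := mul_nonneg (by positivity) (by linarith)
      have : (1/p) * b ^ p - 1/p = (1/p) * (b^p - 1) := by ring
      linarith
    · rw [if_neg h2]
      have : a ^ p ≤ b ^ p := Real.rpow_le_rpow ha hab hp0.le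
      have h5 : 0 < 1/p := by positivity
      nlinarith

lemma subSet_up {Ω : Type*} [MeasurableSpace Ω] {μ : Measure Ω} {p : ℝ} (hp : 1 ≤ p)
    {ξ : Ω → ℝ} {a b : ℝ} (ha : a ∈ subSet μ (phi p) ξ) (hab : a ≤ b) :
    b ∈ subSet μ (phi p) ξ := by
  obtain ⟨ha0, hal⟩ := ha
  refine ⟨ha0.trans hab, fun l => (hal l).trans ?_⟩
  apply ENNReal.ofReal_le_ofReal
  apply Real.exp_le_exp.mpr
  rw [← phi_abs p (a*l), ← phi_abs p (b*l)]
  apply phi_mono p hp (abs_nonneg _)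
  rw [abs_mul, abs_mul]
  apply mul_le_mul_of_nonneg_right _ (abs_nonneg l)
  rw [abs_of_nonneg ha0, abs_of_nonneg (ha0.trans hab)]
  exact hab

lemma subSet_neg {Ω : Type*} [MeasurableSpace Ω] {μ : Measure Ω} {p : ℝ}
    {ξ : Ω → ℝ} {a : ℝ} (ha : a ∈ subSet μ (phi p) ξ) :
    a ∈ subSet μ (phi p) (fun ω => -ξ ω) := by
  obtain ⟨ha0, hal⟩ := ha
  refine ⟨ha0, fun l => ?_⟩
  have := hal (-l)
  simp only [neg_mul] at this ⊢
  rw [mul_neg, phi_neg] at this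
  simpa [mul_comm, neg_mul, mul_neg] using this

lemma chernoff {Ω : Type*} [MeasurableSpace Ω] (μ : Measure Ω) (φ : ℝ → ℝ)
    {ξ : Ω → ℝ} (hξ : Measurable ξ) {a : ℝ} (ha : a ∈ subSet μ φ ξ)
    {l : ℝ} (hl : 0 ≤ l) (t : ℝ) :
    μ {ω | t ≤ ξ ω} ≤ ENNReal.ofReal (Real.exp (φ (a * l) - l * t)) := by
  obtain ⟨_, hal⟩ := ha
  set f : Ω → ℝ≥0∞ := fun ω => ENNReal.ofReal (Real.exp (l * ξ ω)) with hf
  have hfm : AEMeasurable f μ :=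
    ((Real.measurable_exp.comp (hξ.const_mul l)).ennreal_ofReal).aemeasurable
  have hsub : {ω | t ≤ ξ ω} ⊆ {ω | ENNReal.ofReal (Real.exp (l * t)) ≤ f ω} := by
    intro ω hω
    exact ENNReal.ofReal_le_ofReal (Real.exp_le_exp.mpr (mul_le_mul_of_nonneg_left hω hl))
  have hmz : (ENNReal.ofReal (Real.exp (l * t))) ≠ 0 := by
    simp [Real.exp_pos]
  have hmt : (ENNReal.ofReal (Real.exp (l * t))) ≠ ⊤ := ENNReal.ofReal_ne_top
  have hmark := mul_meas_ge_le_lintegral₀ hfm (ENNReal.ofReal (Real.exp (l * t)))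
  have h1 : μ {ω | t ≤ ξ ω} ≤ (∫⁻ ω, f ω ∂μ) / ENNReal.ofReal (Real.exp (l * t)) := by
    rw [ENNReal.le_div_iff_mul_le (Or.inl hmz) (Or.inl hmt)]
    calc μ {ω | t ≤ ξ ω} * ENNReal.ofReal (Real.exp (l * t))
        ≤ μ {ω | ENNReal.ofReal (Real.exp (l * t)) ≤ f ω} * ENNReal.ofReal (Real.exp (l * t)) :=
          mul_le_mul_left (measure_mono hsub) _
      _ = ENNReal.ofReal (Real.exp (l * t)) * μ {ω | ENNReal.ofReal (Real.exp (l * t)) ≤ f ω} :=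
          mul_comm _ _
      _ ≤ ∫⁻ ω, f ω ∂μ := hmark
  calc μ {ω | t ≤ ξ ω} ≤ (∫⁻ ω, f ω ∂μ) / ENNReal.ofReal (Real.exp (l * t)) := h1
    _ ≤ ENNReal.ofReal (Real.exp (φ (a * l))) / ENNReal.ofReal (Real.exp (l * t)) :=
        ENNReal.div_le_div_right (hal l) _
    _ = ENNReal.ofReal (Real.exp (φ (a * l)) / Real.exp (l * t)) :=
        (ENNReal.ofReal_div_of_pos (Real.exp_pos _)).symm
    _ = ENNReal.ofReal (Real.exp (φ (a * l) - l * t)) := by rw [Real.exp_sub]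

lemma chernoff_abs {Ω : Type*} [MeasurableSpace Ω] (μ : Measure Ω) {p : ℝ} (hp : 1 < p)
    {ξ : Ω → ℝ} (hξ : Measurable ξ) {a : ℝ} (ha : a ∈ subSet μ (phi p) ξ)
    (ha0 : 0 < a) {t : ℝ} (hat : a < t) :
    μ {ω | t ≤ |ξ ω|} ≤
      2 * ENNReal.ofReal (Real.exp (1/2 - (1 - 1/p) * (t/a) ^ (p/(p-1)))) := by
  have hp0 : 0 < p := lt_trans one_pos hp
  have hp1 : 0 < p - 1 := by linarith
  set u : ℝ := t / a with hu
  have hu1 : 1 < u := (one_lt_div ha0).mpr hat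
  have hu0 : 0 < u := lt_trans one_pos hu1
  set x : ℝ := 1 / (p - 1) with hx
  have hx0 : 0 < x := by positivity
  set s : ℝ := u ^ x with hs
  have hs1 : 1 < s := Real.one_lt_rpow_iff_of_pos hu0 |>.mpr (Or.inl ⟨hu1, hx0⟩)
  set l : ℝ := s / a with hl
  have hl0 : 0 ≤ l := by positivity
  have hal : a * l = s := by rw [hl]; field_simp
  -- key exponent computation
  have hsp : s ^ p = u ^ (p/(p-1)) := by
    rw [hs, ← Real.rpow_mul hu0.le x p, hx, one_div_mul_eq_div]
  have hsu : s * u = u ^ (p/(p-1)) := by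
    rw [hs]
    nth_rewrite 2 [← Real.rpow_one u]
    rw [← Real.rpow_add hu0]
    congr 1
    rw [hx]
    field_simp
    ring
  have hlt : l * t = s * u := by
    rw [hl, hu]; field_simp
  have hphi : phi p (a * l) = (1/p) * s ^ p - 1/p + 1/2 := by
    rw [hal, phi, if_neg (by rw [abs_of_nonneg (by positivity : (0:ℝ) ≤ s)]; linarith),
      abs_of_nonneg (by positivity : (0:ℝ) ≤ s)]
  have hexp : phi p (a * l) - l * t ≤ 1/2 - (1 - 1/p) * u ^ (p/(p-1)) := by
    rw [hphi, hlt, hsp, hsu]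
    have : 0 < 1/p := by positivity
    nlinarith [Real.rpow_pos_of_pos hu0 (p/(p-1))]
  have hunion : {ω | t ≤ |ξ ω|} ⊆ {ω | t ≤ ξ ω} ∪ {ω | t ≤ -ξ ω} := by
    intro ω hω
    rcases le_abs.mp (Set.mem_setOf_eq ▸ hω) with h | h
    · exact Or.inl h
    · exact Or.inr h
  have h1 : μ {ω | t ≤ ξ ω} ≤ ENNReal.ofReal (Real.exp (1/2 - (1 - 1/p) * u ^ (p/(p-1)))) :=
    (chernoff μ (phi p) hξ ha hl0 t).trans
      (ENNReal.ofReal_le_ofReal (Real.exp_le_exp.mpr hexp))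
  have h2 : μ {ω | t ≤ -ξ ω} ≤ ENNReal.ofReal (Real.exp (1/2 - (1 - 1/p) * u ^ (p/(p-1)))) :=
    (chernoff μ (phi p) hξ.neg (subSet_neg ha) hl0 t).trans
      (ENNReal.ofReal_le_ofReal (Real.exp_le_exp.mpr hexp))
  calc μ {ω | t ≤ |ξ ω|} ≤ μ ({ω | t ≤ ξ ω} ∪ {ω | t ≤ -ξ ω}) := measure_mono hunion
    _ ≤ μ {ω | t ≤ ξ ω} + μ {ω | t ≤ -ξ ω} := measure_union_le _ _
    _ ≤ _ := by rw [two_mul]; exact add_le_add h1 h2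

lemma summable_exp_neg_rpow' {k β : ℝ} (hk : 0 < k) (hβ : 0 < β) :
    Summable (fun n : ℕ => Real.exp (-(k * (n:ℝ) ^ β))) := by
  have h1 : Tendsto (fun y : ℝ => y ^ (2/β) * Real.exp (-k * y)) atTop (nhds 0) :=
    tendsto_rpow_mul_exp_neg_mul_atTop_nhds_zero (2/β) k hk
  have h2 : Tendsto (fun n : ℕ => ((n:ℝ)) ^ β) atTop atTop :=
    (tendsto_rpow_atTop hβ).comp tendsto_natCast_atTop_atTop
  have h3 : Tendsto (fun n : ℕ => ((n:ℝ) ^ β) ^ (2/β) * Real.exp (-k * (n:ℝ) ^ β))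
      atTop (nhds 0) := h1.comp h2
  have h4 : ∀ᶠ n : ℕ in atTop, ((n:ℝ) ^ β) ^ (2/β) * Real.exp (-k * (n:ℝ) ^ β) < 1 :=
    h3.eventually_lt_const one_pos
  apply summable_of_isBigO_nat (Real.summable_one_div_nat_rpow.mpr (by norm_num : (1:ℝ) < 2))
  rw [Asymptotics.isBigO_iff]
  refine ⟨1, ?_⟩
  filter_upwards [h4, eventually_ge_atTop 1] with n hn hn1
  have hn0 : (0:ℝ) < (n : ℝ) := by exact_mod_cast hn1
  have hident : ((n:ℝ) ^ β) ^ (2/β) = (n:ℝ) ^ (2:ℝ) := by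
    rw [← Real.rpow_mul (le_of_lt hn0)]
    congr 1
    field_simp
  rw [hident] at hn
  have hpos : (0:ℝ) < (n:ℝ) ^ (2:ℝ) := Real.rpow_pos_of_pos hn0 2
  have : Real.exp (-(k * (n:ℝ) ^ β)) ≤ 1 / (n:ℝ) ^ (2:ℝ) := by
    rw [le_div_iff₀ hpos]
    calc Real.exp (-(k * (n:ℝ) ^ β)) * (n:ℝ) ^ (2:ℝ)
        = (n:ℝ) ^ (2:ℝ) * Real.exp (-k * (n:ℝ) ^ β) := by rw [neg_mul]; ring
      _ ≤ 1 := hn.le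
  rw [Real.norm_eq_abs, Real.norm_eq_abs, abs_of_pos (Real.exp_pos _),
    abs_of_pos (by positivity : (0:ℝ) < 1 / (n:ℝ) ^ ((2:ℝ)))]
  · linarith

/-- Complete convergence: under `τ_{φ_p}(∑_{i=1}^n ξ_i) ≤ c·n^{1−α}`, for every `ε > 0`
the series `∑_{n=1}^∞ P(|∑_{i=1}^n ξ_i| ≥ nε)` converges, i.e. `n⁻¹ ∑_{i=1}^n ξ_i → 0`
completely. -/
theorem complete_convergence_phi_subgaussian
    {Ω : Type*} [MeasurableSpace Ω] (μ : Measure Ω) [IsProbabilityMeasure μ]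
    (p : ℝ) (hp : 1 < p)
    (ξ : ℕ → Ω → ℝ) (hmeas : ∀ n, Measurable (ξ n))
    (hsub : ∀ n, (subSet μ (phi p) (ξ n)).Nonempty)
    (hsubsum : ∀ n : ℕ, 1 ≤ n → (subSet μ (phi p) (fun ω => ∑ i ∈ Finset.Icc 1 n, ξ i ω)).Nonempty)
    (c α : ℝ) (hc : 0 < c) (hα : 0 < α)
    (hτ : ∀ n : ℕ, 1 ≤ n →
      tau μ (phi p) (fun ω => ∑ i ∈ Finset.Icc 1 n, ξ i ω) ≤ c * (n : ℝ) ^ ((1 : ℝ) - α))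
    (ε : ℝ) (hε : 0 < ε) :
    (∑' n : ℕ,
      μ {ω | ((n + 1 : ℕ) : ℝ) * ε ≤ |∑ i ∈ Finset.Icc 1 (n + 1), ξ i ω|}) < ⊤ := by
  have hp0 : 0 < p := lt_trans one_pos hp
  have hp1 : 0 < p - 1 := by linarith
  set q : ℝ := p / (p - 1) with hq
  have hq0 : 0 < q := div_pos hp0 hp1
  set κ : ℝ := 1 - 1/p with hκ
  have hκ0 : 0 < κ := by
    have h1 : 1/p < 1 := by rw [div_lt_one hp0]; linarith
    simp only [hκ]; linarith
  set d : ℝ := ε / (2*c) with hd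
  have hd0 : 0 < d := by positivity
  set k : ℝ := κ * d ^ q with hk
  have hk0 : 0 < k := mul_pos hκ0 (Real.rpow_pos_of_pos hd0 q)
  set β : ℝ := α * q with hβ
  have hβ0 : 0 < β := mul_pos hα hq0
  have hSmeas : ∀ n : ℕ, Measurable (fun ω => ∑ i ∈ Finset.Icc 1 n, ξ i ω) :=
    fun n => Finset.measurable_sum _ (fun i _ => hmeas i)
  -- choose N such that (n:ℝ)^α > 2c/ε for n ≥ N
  have htend : Tendsto (fun n : ℕ => ((n:ℝ)) ^ α) atTop atTop :=
    (tendsto_rpow_atTop hα).comp tendsto_natCast_atTop_atTop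
  obtain ⟨N, hN⟩ := eventually_atTop.mp (htend.eventually_gt_atTop (2*c/ε))
  -- the key per-n bound
  have key : ∀ n : ℕ, N ≤ n → 1 ≤ n →
      μ {ω | (n:ℝ) * ε ≤ |∑ i ∈ Finset.Icc 1 n, ξ i ω|} ≤
        2 * ENNReal.ofReal (Real.exp (1/2 - k * (n:ℝ) ^ β)) := by
    intro n hnN hn1
    have hnR : (0:ℝ) < (n:ℝ) := by exact_mod_cast hn1
    have hnr : (0:ℝ) < (n:ℝ) ^ ((1:ℝ) - α) := Real.rpow_pos_of_pos hnR _
    have hcn : (0:ℝ) < c * (n:ℝ) ^ ((1:ℝ) - α) := by positivity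
    obtain ⟨a, ha, ha2⟩ := exists_lt_of_csInf_lt (hsubsum n hn1)
      (lt_of_le_of_lt (hτ n hn1) (by linarith : c * (n:ℝ) ^ ((1:ℝ) - α)
        < 2 * (c * (n:ℝ) ^ ((1:ℝ) - α))))
    set b : ℝ := max a (c * (n:ℝ) ^ ((1:ℝ) - α)) with hb
    have hbmem : b ∈ subSet μ (phi p) (fun ω => ∑ i ∈ Finset.Icc 1 n, ξ i ω) :=
      subSet_up hp.le ha (le_max_left _ _)
    have hb0 : 0 < b := lt_of_lt_of_le hcn (le_max_right _ _)
    have hble : b ≤ 2 * c * (n:ℝ) ^ ((1:ℝ) - α) :=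
      max_le (by linarith) (by linarith)
    have hsplit : (n:ℝ) ^ α * (n:ℝ) ^ ((1:ℝ) - α) = (n:ℝ) := by
      rw [← Real.rpow_add hnR, show α + ((1:ℝ) - α) = (1:ℝ) by ring, Real.rpow_one]
    have hNα : 2 * c < ε * (n:ℝ) ^ α := by
      have := hN n hnN
      rw [div_lt_iff₀ hε] at this
      linarith [this]
    have hbt : b < (n:ℝ) * ε := by
      have h2 : 2 * c * (n:ℝ) ^ ((1:ℝ) - α) < ε * (n:ℝ) ^ α * (n:ℝ) ^ ((1:ℝ) - α) := by
        exact mul_lt_mul_of_pos_right hNα hnr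
      calc b ≤ 2 * c * (n:ℝ) ^ ((1:ℝ) - α) := hble
        _ < ε * (n:ℝ) ^ α * (n:ℝ) ^ ((1:ℝ) - α) := h2
        _ = (n:ℝ) * ε := by rw [mul_assoc, hsplit]; ring
    have hchern := chernoff_abs μ hp (hSmeas n) hbmem hb0 hbt
    refine hchern.trans ?_
    apply mul_le_mul_right
    apply ENNReal.ofReal_le_ofReal
    apply Real.exp_le_exp.mpr
    have hdn : d * (n:ℝ) ^ α ≤ (n:ℝ) * ε / b := by
      have heq : d * (n:ℝ) ^ α = (n:ℝ) * ε / (2 * c * (n:ℝ) ^ ((1:ℝ) - α)) := by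
        rw [eq_div_iff (by positivity)]
        calc d * (n:ℝ) ^ α * (2 * c * (n:ℝ) ^ ((1:ℝ) - α))
            = (ε / (2*c) * (2*c)) * ((n:ℝ) ^ α * (n:ℝ) ^ ((1:ℝ) - α)) := by rw [hd]; ring
          _ = ε * (n:ℝ) := by rw [div_mul_cancel₀ ε (by positivity : (2*c : ℝ) ≠ 0), hsplit]
          _ = (n:ℝ) * ε := mul_comm _ _
      rw [heq]
      gcongr
    have hdn0 : 0 < d * (n:ℝ) ^ α := by positivity
    have hrq : d ^ q * (n:ℝ) ^ β ≤ ((n:ℝ) * ε / b) ^ q := by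
      calc d ^ q * (n:ℝ) ^ β = (d * (n:ℝ) ^ α) ^ q := by
            rw [Real.mul_rpow hd0.le (Real.rpow_pos_of_pos hnR α).le, hβ,
              Real.rpow_mul hnR.le]
        _ ≤ ((n:ℝ) * ε / b) ^ q := Real.rpow_le_rpow hdn0.le hdn hq0.le
    have : k * (n:ℝ) ^ β ≤ κ * ((n:ℝ) * ε / b) ^ q := by
      rw [hk, mul_assoc]
      exact mul_le_mul_of_nonneg_left hrq hκ0.le
    linarith
  -- assemble
  rw [← Summable.sum_add_tsum_nat_add' (k := N) ENNReal.summable]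
  apply ENNReal.add_lt_top.mpr
  constructor
  · exact ENNReal.sum_lt_top.mpr (fun i _ => measure_lt_top μ _)
  · -- tail
    have hsum0 : Summable (fun m : ℕ => 2 * Real.exp (1/2 - k * (m:ℝ) ^ β)) := by
      have := (summable_exp_neg_rpow' hk0 hβ0).mul_left (2 * Real.exp (1/2))
      refine this.congr (fun m => ?_)
      rw [show (1:ℝ)/2 - k * (m:ℝ) ^ β = 1/2 + -(k * (m:ℝ) ^ β) by ring, Real.exp_add]
      ring
    have hsum : Summable (fun i : ℕ => 2 * Real.exp (1/2 - k * ((i + (N+1) : ℕ):ℝ) ^ β)) :=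
      (summable_nat_add_iff (N+1)).mpr hsum0
    have hle : ∀ i : ℕ,
        μ {ω | (((i + N) + 1 : ℕ) : ℝ) * ε ≤ |∑ j ∈ Finset.Icc 1 ((i + N) + 1), ξ j ω|}
          ≤ ENNReal.ofReal (2 * Real.exp (1/2 - k * ((i + (N+1) : ℕ):ℝ) ^ β)) := by
      intro i
      have h1 : (i + N) + 1 = i + (N + 1) := by omega
      rw [h1]
      refine (key (i + (N+1)) (by omega) (by omega)).trans ?_
      rw [ENNReal.ofReal_mul (by norm_num : (0:ℝ) ≤ 2)]
      simp
    calc (∑' i : ℕ, μ {ω | (((i + N) + 1 : ℕ) : ℝ) * ε ≤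
            |∑ j ∈ Finset.Icc 1 ((i + N) + 1), ξ j ω|})
        ≤ ∑' i : ℕ, ENNReal.ofReal (2 * Real.exp (1/2 - k * ((i + (N+1) : ℕ):ℝ) ^ β)) :=
          ENNReal.tsum_le_tsum hle
      _ = ENNReal.ofReal (∑' i : ℕ, 2 * Real.exp (1/2 - k * ((i + (N+1) : ℕ):ℝ) ^ β)) :=
          (ENNReal.ofReal_tsum_of_nonneg (fun i => by positivity) hsum).symm
      _ < ⊤ := ENNReal.ofReal_lt_top
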